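/- (Stability of PA-II.) Let u⁰ ∈ ℝ^m and let (U_n^k)_{n,k≥0} be a family of vectors in ℝ^m satisfying U_0^k = u⁰ for all k and the Parareal recurrence U_{n+1}^{k+1} = P_2·U_n^{k+1} + (P_{J_2} − P_2)·U_n^k for all n, k ≥ 0. Then for every n and k, ‖U_{n+1}^{k+1}‖ ≤ ‖u⁰‖ + (n+1)·max_{0≤j≤n} ‖U_j^k‖. -/

import Mathlib

/-- The m×m discrete Dirichlet Laplacian with mesh size `h`. -/
noncomputable def Dh (m : ℕ) (h : ℝ) : Matrix (Fin m) (Fin m) ℝ :=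
  Matrix.of fun i j =>
    if (i : ℕ) = (j : ℕ) then 1 / h ^ 2 * (-2)
    else if (i : ℕ) + 1 = (j : ℕ) ∨ (j : ℕ) + 1 = (i : ℕ) then 1 / h ^ 2 * 1
    else 0

/-- `Pmat m h ΔT ε i = (I − iΔT·D_h + ε²ΔT·D_h²)⁻¹ (I − iΔT·D_h)`. -/
noncomputable def Pmat (m : ℕ) (h ΔT ε : ℝ) (i : ℕ) : Matrix (Fin m) (Fin m) ℝ :=
  ((1 : Matrix (Fin m) (Fin m) ℝ) - ((i : ℝ) * ΔT) • Dh m h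
      + (ε ^ 2 * ΔT) • Dh m h ^ 2)⁻¹
    * ((1 : Matrix (Fin m) (Fin m) ℝ) - ((i : ℝ) * ΔT) • Dh m h)

/-- `PJmat m h ΔT ε J i = [(I − (iΔT/J)·D_h + ε²(ΔT/J)·D_h²)⁻¹ (I − (iΔT/J)·D_h)]^J`. -/
noncomputable def PJmat (m : ℕ) (h ΔT ε : ℝ) (J i : ℕ) : Matrix (Fin m) (Fin m) ℝ :=
  (((1 : Matrix (Fin m) (Fin m) ℝ) - ((i : ℝ) * ΔT / (J : ℝ)) • Dh m h
      + (ε ^ 2 * (ΔT / (J : ℝ))) • Dh m h ^ 2)⁻¹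
    * ((1 : Matrix (Fin m) (Fin m) ℝ) - ((i : ℝ) * ΔT / (J : ℝ)) • Dh m h)) ^ J

/-- The action of a matrix on `EuclideanSpace ℝ (Fin m)` (i.e. `ℝ^m` with the
Euclidean norm), given by matrix-vector multiplication. -/
noncomputable def act {m : ℕ} (A : Matrix (Fin m) (Fin m) ℝ)
    (U : EuclideanSpace ℝ (Fin m)) : EuclideanSpace ℝ (Fin m) :=
  Matrix.toEuclideanCLM (𝕜 := ℝ) A U

/-- The operator (spectral) norm of a matrix, induced by the Euclidean norm. -/
noncomputable def opNorm {m : ℕ} (A : Matrix (Fin m) (Fin m) ℝ) : ℝ :=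
  ‖Matrix.toEuclideanCLM (𝕜 := ℝ) A‖


namespace Stmt11Aux
open Matrix

variable {m : ℕ}

/-- Conjugation of a diagonal matrix by `V`. -/
noncomputable def cg (V : Matrix (Fin m) (Fin m) ℝ) (d : Fin m → ℝ) : Matrix (Fin m) (Fin m) ℝ :=
  V * Matrix.diagonal d * star V

variable {V : Matrix (Fin m) (Fin m) ℝ}

lemma cg_mul (hV : V ∈ Matrix.unitaryGroup (Fin m) ℝ) (d e : Fin m → ℝ) :
    cg V d * cg V e = cg V (d * e) := by
  have hV' : star V * V = 1 := Matrix.mem_unitaryGroup_iff'.mp hV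
  simp only [cg, mul_assoc]
  rw [← mul_assoc (star V) V _, hV', one_mul, ← mul_assoc (diagonal d) (diagonal e),
    diagonal_mul_diagonal]
  rfl

lemma cg_one (hV : V ∈ Matrix.unitaryGroup (Fin m) ℝ) : cg V 1 = 1 := by
  have hV' : V * star V = 1 := Matrix.mem_unitaryGroup_iff.mp hV
  rw [cg, show Matrix.diagonal (1 : Fin m → ℝ) = 1 from Matrix.diagonal_one, mul_one, hV']

lemma cg_add (d e : Fin m → ℝ) : cg V d + cg V e = cg V (d + e) := by
  rw [cg, cg, cg, show Matrix.diagonal (d + e) = Matrix.diagonal d + Matrix.diagonal e from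
    (Matrix.diagonal_add d e).symm, mul_add, add_mul]

lemma cg_sub (d e : Fin m → ℝ) : cg V d - cg V e = cg V (d - e) := by
  rw [cg, cg, cg, show Matrix.diagonal (d - e) = Matrix.diagonal d - Matrix.diagonal e from
    (Matrix.diagonal_sub d e).symm, mul_sub, sub_mul]

lemma cg_smul (r : ℝ) (d : Fin m → ℝ) : r • cg V d = cg V (r • d) := by
  rw [cg, cg, show Matrix.diagonal (r • d) = r • Matrix.diagonal d from
    (Matrix.diagonal_smul r d), mul_smul_comm, smul_mul_assoc]

lemma cg_pow (hV : V ∈ Matrix.unitaryGroup (Fin m) ℝ) (d : Fin m → ℝ) (J : ℕ) :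
    cg V d ^ J = cg V (d ^ J) := by
  induction J with
  | zero => simp [cg_one hV]
  | succ n ih => rw [pow_succ, pow_succ, ih, cg_mul hV]

lemma cg_inv (hV : V ∈ Matrix.unitaryGroup (Fin m) ℝ) (d : Fin m → ℝ) (hd : ∀ i, d i ≠ 0) :
    (cg V d)⁻¹ = cg V d⁻¹ := by
  apply Matrix.inv_eq_right_inv
  rw [cg_mul hV]
  have : d * d⁻¹ = 1 := by
    funext i
    exact mul_inv_cancel₀ (hd i)
  rw [this, cg_one hV]

lemma norm_unitary_apply (hW : V ∈ Matrix.unitaryGroup (Fin m) ℝ)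
    (x : EuclideanSpace ℝ (Fin m)) :
    ‖Matrix.toEuclideanCLM (𝕜 := ℝ) V x‖ = ‖x‖ := by
  have h1 : star (toEuclideanCLM (𝕜 := ℝ) V) * toEuclideanCLM (𝕜 := ℝ) V = 1 := by
    rw [← map_star, ← _root_.map_mul, Matrix.mem_unitaryGroup_iff'.mp hW, _root_.map_one]
  have h2 : (star (toEuclideanCLM (𝕜 := ℝ) V)) ((toEuclideanCLM (𝕜 := ℝ) V) x) = x := by
    have := congrFun (congrArg DFunLike.coe h1) x
    simpa using this
  have key : inner ℝ ((toEuclideanCLM (𝕜 := ℝ) V) x) ((toEuclideanCLM (𝕜 := ℝ) V) x)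
      = (inner ℝ x x : ℝ) := by
    rw [← ContinuousLinearMap.adjoint_inner_right (toEuclideanCLM (𝕜 := ℝ) V),
      ← ContinuousLinearMap.star_eq_adjoint, h2]
  have hsq : ‖toEuclideanCLM (𝕜 := ℝ) V x‖ ^ 2 = ‖x‖ ^ 2 := by
    rw [← real_inner_self_eq_norm_sq, ← real_inner_self_eq_norm_sq, key]
  nlinarith [norm_nonneg (toEuclideanCLM (𝕜 := ℝ) V x), norm_nonneg x]

lemma norm_diagonal_apply_le (d : Fin m → ℝ) (c : ℝ) (hc : 0 ≤ c) (hd : ∀ i, |d i| ≤ c)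
    (x : EuclideanSpace ℝ (Fin m)) :
    ‖Matrix.toEuclideanCLM (𝕜 := ℝ) (Matrix.diagonal d) x‖ ≤ c * ‖x‖ := by
  have happ : ∀ i, (Matrix.toEuclideanCLM (𝕜 := ℝ) (Matrix.diagonal d) x) i = d i * x i := by
    intro i
    show (Matrix.diagonal d *ᵥ (x : Fin m → ℝ)) i = _
    rw [Matrix.mulVec_diagonal]
  rw [EuclideanSpace.norm_eq, EuclideanSpace.norm_eq]
  rw [show c = Real.sqrt (c ^ 2) from (Real.sqrt_sq hc).symm, ← Real.sqrt_mul (by positivity)]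
  apply Real.sqrt_le_sqrt
  rw [Finset.mul_sum]
  apply Finset.sum_le_sum
  intro i _
  rw [happ]
  simp only [Real.norm_eq_abs, abs_mul, mul_pow]
  exact mul_le_mul_of_nonneg_right (pow_le_pow_left₀ (abs_nonneg _) (hd i) 2) (by positivity)

lemma norm_cg_le (hV : V ∈ Matrix.unitaryGroup (Fin m) ℝ) (d : Fin m → ℝ) (c : ℝ)
    (hc : 0 ≤ c) (hd : ∀ i, |d i| ≤ c) :
    ‖Matrix.toEuclideanCLM (𝕜 := ℝ) (cg V d)‖ ≤ c := by
  apply ContinuousLinearMap.opNorm_le_bound _ hc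
  intro x
  have expand : (toEuclideanCLM (𝕜 := ℝ) (cg V d)) x
      = (toEuclideanCLM (𝕜 := ℝ) V) ((toEuclideanCLM (𝕜 := ℝ) (diagonal d))
        ((toEuclideanCLM (𝕜 := ℝ) (star V)) x)) := by
    simp only [cg, _root_.map_mul]
    rfl
  rw [expand, norm_unitary_apply hV]
  calc ‖(toEuclideanCLM (𝕜 := ℝ) (diagonal d)) ((toEuclideanCLM (𝕜 := ℝ) (star V)) x)‖
      ≤ c * ‖(toEuclideanCLM (𝕜 := ℝ) (star V)) x‖ := norm_diagonal_apply_le d c hc hd _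
    _ = c * ‖x‖ := by
        rw [norm_unitary_apply (by
          rw [Matrix.mem_unitaryGroup_iff, star_star]
          exact Matrix.mem_unitaryGroup_iff'.mp hV) x]


lemma isHermitian_Dh (m : ℕ) (h : ℝ) : (Dh m h).IsHermitian := by
  ext i j
  simp only [Dh, Matrix.conjTranspose_apply, Matrix.of_apply, star_trivial]
  by_cases h1 : (i : ℕ) = (j : ℕ)
  · simp [h1]
  · simp only [h1, Ne.symm h1, if_false]
    by_cases h2 : (i : ℕ) + 1 = (j : ℕ) ∨ (j : ℕ) + 1 = (i : ℕ)
    · simp [h2, h2.symm, Or.symm h2]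
    · have h2' : ¬((j : ℕ) + 1 = (i : ℕ) ∨ (i : ℕ) + 1 = (j : ℕ)) := by tauto
      simp [h2, h2']

lemma sum_ind_le {m : ℕ} (v : ℕ) (c : ℝ) (hc : 0 ≤ c) :
    ∑ j : Fin m, (if (j : ℕ) = v then c else 0) ≤ c := by
  by_cases hv : v < m
  · have : ∀ j : Fin m, ((j : ℕ) = v) = (j = ⟨v, hv⟩) := by
      intro j; simp [Fin.ext_iff]
    simp only [this]
    rw [Finset.sum_ite_eq' Finset.univ (⟨v, hv⟩ : Fin m) (fun _ => c)]
    simp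
  · have : ∀ j : Fin m, ¬((j : ℕ) = v) := by
      intro j hj; exact hv (hj ▸ j.isLt)
    simp [this, hc]

lemma sum_ind_le' {m : ℕ} (P : Prop) [Decidable P] (v : ℕ) (c : ℝ) (hc : 0 ≤ c) :
    ∑ j : Fin m, (if P ∧ (j : ℕ) = v then c else 0) ≤ c := by
  by_cases hP : P
  · simp only [hP, true_and]
    exact sum_ind_le v c hc
  · simp only [hP, false_and, if_false, Finset.sum_const_zero]
    exact hc

lemma eigenvalues_Dh_nonpos (m : ℕ) (h : ℝ) (hh : 0 < h) (i : Fin m) :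
    (isHermitian_Dh m h).eigenvalues i ≤ 0 := by
  set μ := (isHermitian_Dh m h).eigenvalues i with hμ
  have hmem : μ ∈ spectrum ℝ (Dh m h) := (isHermitian_Dh m h).eigenvalues_mem_spectrum_real i
  have heq : Matrix.toLinAlgEquiv' (Dh m h) = Matrix.toLin' (Dh m h) := by
    ext x j
    rfl
  have hEig : Module.End.HasEigenvalue (Matrix.toLin' (Dh m h)) μ := by
    rw [Module.End.hasEigenvalue_iff_mem_spectrum, ← heq, AlgEquiv.spectrum_eq]
    exact hmem
  obtain ⟨k, hk⟩ := eigenvalue_mem_ball hEig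
  rw [Metric.mem_closedBall, Real.dist_eq] at hk
  have hdiag : Dh m h k k = -(2 / h ^ 2) := by
    simp [Dh]; ring
  have hc : (0 : ℝ) < 1 / h ^ 2 := by positivity
  have hrad : ∑ j ∈ Finset.univ.erase k, ‖Dh m h k j‖ ≤ 2 / h ^ 2 := by
    have hle : ∀ j ∈ Finset.univ.erase k, ‖Dh m h k j‖ ≤
        (if (j : ℕ) = (k : ℕ) + 1 then 1 / h ^ 2 else 0)
          + (if (k : ℕ) ≠ 0 ∧ (j : ℕ) = (k : ℕ) - 1 then 1 / h ^ 2 else 0) := by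
      intro j hj
      have hjk : j ≠ k := Finset.ne_of_mem_erase hj
      have hjk' : (k : ℕ) ≠ (j : ℕ) := fun hcon => hjk (Fin.ext hcon.symm)
      simp only [Dh, Matrix.of_apply, hjk', if_false]
      by_cases h2 : (k : ℕ) + 1 = (j : ℕ) ∨ (j : ℕ) + 1 = (k : ℕ)
      · rw [if_pos h2]
        rw [Real.norm_eq_abs, mul_one, abs_of_pos hc]
        rcases h2 with h2 | h2
        · rw [if_pos h2.symm]
          have : (0:ℝ) ≤ if (k : ℕ) ≠ 0 ∧ (j : ℕ) = (k : ℕ) - 1 then 1 / h ^ 2 else 0 := by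
            split <;> positivity
          linarith
        · have hcond : (k : ℕ) ≠ 0 ∧ (j : ℕ) = (k : ℕ) - 1 := ⟨by omega, by omega⟩
          rw [if_pos hcond]
          have : (0:ℝ) ≤ if (j : ℕ) = (k : ℕ) + 1 then 1 / h ^ 2 else 0 := by
            split <;> positivity
          linarith
      · rw [if_neg h2]
        simp only [norm_zero]
        have h3 : (0:ℝ) ≤ if (j : ℕ) = (k : ℕ) + 1 then 1 / h ^ 2 else 0 := by
          split <;> positivity
        have h4 : (0:ℝ) ≤ if (k : ℕ) ≠ 0 ∧ (j : ℕ) = (k : ℕ) - 1 then 1 / h ^ 2 else 0 := by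
          split <;> positivity
        linarith
    calc ∑ j ∈ Finset.univ.erase k, ‖Dh m h k j‖
        ≤ ∑ j ∈ Finset.univ.erase k, ((if (j : ℕ) = (k : ℕ) + 1 then 1 / h ^ 2 else 0)
          + (if (k : ℕ) ≠ 0 ∧ (j : ℕ) = (k : ℕ) - 1 then 1 / h ^ 2 else 0)) :=
          Finset.sum_le_sum hle
      _ ≤ ∑ j : Fin m, ((if (j : ℕ) = (k : ℕ) + 1 then 1 / h ^ 2 else 0)
          + (if (k : ℕ) ≠ 0 ∧ (j : ℕ) = (k : ℕ) - 1 then 1 / h ^ 2 else 0)) := by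
          apply Finset.sum_le_sum_of_subset_of_nonneg (Finset.erase_subset k Finset.univ)
          intro j _ _
          have h3 : (0:ℝ) ≤ if (j : ℕ) = (k : ℕ) + 1 then 1 / h ^ 2 else 0 := by
            split <;> positivity
          have h4 : (0:ℝ) ≤ if (k : ℕ) ≠ 0 ∧ (j : ℕ) = (k : ℕ) - 1 then 1 / h ^ 2 else 0 := by
            split <;> positivity
          linarith
      _ ≤ 1 / h ^ 2 + 1 / h ^ 2 := by
          rw [Finset.sum_add_distrib]
          gcongr
          · exact sum_ind_le _ _ hc.le
          · exact sum_ind_le' _ _ _ hc.le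
      _ = 2 / h ^ 2 := by ring
  have := abs_le.mp hk
  rw [hdiag] at this
  linarith [this.2, hrad]

lemma p_bounds (c e t : ℝ) (hc : 0 ≤ c) (he : 0 ≤ e) (ht : t ≤ 0) :
    0 < (1 - c * t + e * t ^ 2)⁻¹ * (1 - c * t) ∧
      (1 - c * t + e * t ^ 2)⁻¹ * (1 - c * t) ≤ 1 := by
  have ha : (0:ℝ) < 1 - c * t := by nlinarith
  have hb : (0:ℝ) < 1 - c * t + e * t ^ 2 := by nlinarith
  have hab : 1 - c * t ≤ 1 - c * t + e * t ^ 2 := by nlinarith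
  refine ⟨by positivity, ?_⟩
  calc (1 - c * t + e * t ^ 2)⁻¹ * (1 - c * t)
      ≤ (1 - c * t + e * t ^ 2)⁻¹ * (1 - c * t + e * t ^ 2) :=
        mul_le_mul_of_nonneg_left hab (by positivity)
    _ = 1 := inv_mul_cancel₀ (ne_of_gt hb)

lemma rep {m : ℕ} {V : Matrix (Fin m) (Fin m) ℝ} (hV : V ∈ Matrix.unitaryGroup (Fin m) ℝ)
    {S : Matrix (Fin m) (Fin m) ℝ} {μ : Fin m → ℝ} (hspec : S = cg V μ)
    (c e : ℝ) (hb : ∀ i, 1 - c * μ i + e * μ i ^ 2 ≠ 0) :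
    ((1 : Matrix (Fin m) (Fin m) ℝ) - c • S + e • S ^ 2)⁻¹
        * ((1 : Matrix (Fin m) (Fin m) ℝ) - c • S)
      = cg V (fun i => (1 - c * μ i + e * μ i ^ 2)⁻¹ * (1 - c * μ i)) := by
  have hone : (1 : Matrix (Fin m) (Fin m) ℝ) = cg V 1 := (cg_one hV).symm
  have hA : (1 : Matrix (Fin m) (Fin m) ℝ) - c • S = cg V (fun i => 1 - c * μ i) := by
    rw [hspec, hone, cg_smul, cg_sub]
    rfl
  have hB : (1 : Matrix (Fin m) (Fin m) ℝ) - c • S + e • S ^ 2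
      = cg V (fun i => 1 - c * μ i + e * μ i ^ 2) := by
    rw [hspec, hone, cg_pow hV μ 2, cg_smul, cg_smul, cg_sub, cg_add]
    rfl
  rw [hB, hA, cg_inv hV _ hb, cg_mul hV]
  rfl

end Stmt11Aux

theorem stmt11 (h ΔT ε : ℝ) (hh : 0 < h) (hΔT : 0 < ΔT) (hε : 0 < ε)
    (m : ℕ) (hm : 1 ≤ m) (J : ℕ) (hJ : 2 ≤ J)
    (u0 : EuclideanSpace ℝ (Fin m)) (U : ℕ → ℕ → EuclideanSpace ℝ (Fin m))
    (h0 : ∀ k, U 0 k = u0)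
    (hrec : ∀ n k, U (n + 1) (k + 1) =
      act (Pmat m h ΔT ε 2) (U n (k + 1))
        + act (PJmat m h ΔT ε J 2 - Pmat m h ΔT ε 2) (U n k)) :
    ∀ n k, ‖U (n + 1) (k + 1)‖ ≤ ‖u0‖ +
      ((n : ℝ) + 1) *
        ((Finset.range (n + 1)).sup' (Finset.nonempty_range_iff.mpr n.succ_ne_zero)
          fun j => ‖U j k‖) := by
  classical
  have hS : (Dh m h).IsHermitian := Stmt11Aux.isHermitian_Dh m h
  set V : Matrix (Fin m) (Fin m) ℝ :=
    (Matrix.IsHermitian.eigenvectorUnitary hS : Matrix (Fin m) (Fin m) ℝ) with hVdef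
  have hV : V ∈ Matrix.unitaryGroup (Fin m) ℝ := (Matrix.IsHermitian.eigenvectorUnitary hS).2
  set μ : Fin m → ℝ := hS.eigenvalues with hμdef
  have hμ : ∀ i, μ i ≤ 0 := fun i => Stmt11Aux.eigenvalues_Dh_nonpos m h hh i
  have hspec : Dh m h = Stmt11Aux.cg V μ := by
    have hcomp : (RCLike.ofReal ∘ μ : Fin m → ℝ) = μ := by
      funext i; simp [RCLike.ofReal]
    rw [Stmt11Aux.cg]
    conv_lhs => rw [hS.spectral_theorem]
    rw [hcomp]
    rfl
  have hJpos : (0:ℝ) < (J:ℝ) := by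
    have : 0 < J := by omega
    exact_mod_cast this
  have hc1 : (0:ℝ) ≤ 2 * ΔT := by positivity
  have he1 : (0:ℝ) ≤ ε ^ 2 * ΔT := by positivity
  have hc2 : (0:ℝ) ≤ 2 * ΔT / (J:ℝ) := div_nonneg hc1 hJpos.le
  have he2 : (0:ℝ) ≤ ε ^ 2 * (ΔT / (J:ℝ)) :=
    mul_nonneg (sq_nonneg ε) (div_nonneg hΔT.le hJpos.le)
  have hb1 : ∀ i : Fin m, 1 - (2 * ΔT) * μ i + (ε ^ 2 * ΔT) * μ i ^ 2 ≠ 0 := fun i =>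
    ne_of_gt (by nlinarith [mul_nonneg hc1 (neg_nonneg.mpr (hμ i)), mul_nonneg he1 (sq_nonneg (μ i))])
  have hb2 : ∀ i : Fin m, 1 - (2 * ΔT / (J:ℝ)) * μ i + (ε ^ 2 * (ΔT / (J:ℝ))) * μ i ^ 2 ≠ 0 :=
    fun i => ne_of_gt (by nlinarith [mul_nonneg hc2 (neg_nonneg.mpr (hμ i)), mul_nonneg he2 (sq_nonneg (μ i))])
  have hp1 := fun i => Stmt11Aux.p_bounds (2 * ΔT) (ε ^ 2 * ΔT) (μ i) hc1 he1 (hμ i)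
  have hp2 := fun i =>
    Stmt11Aux.p_bounds (2 * ΔT / (J:ℝ)) (ε ^ 2 * (ΔT / (J:ℝ))) (μ i) hc2 he2 (hμ i)
  have hPrep : Pmat m h ΔT ε 2 = Stmt11Aux.cg V
      (fun i => (1 - (2 * ΔT) * μ i + (ε ^ 2 * ΔT) * μ i ^ 2)⁻¹ * (1 - (2 * ΔT) * μ i)) := by
    simp only [Pmat, Nat.cast_ofNat]
    exact Stmt11Aux.rep hV hspec _ _ hb1
  have hPJrep : PJmat m h ΔT ε J 2 = Stmt11Aux.cg V
      (fun i => ((1 - (2 * ΔT / (J:ℝ)) * μ i + (ε ^ 2 * (ΔT / (J:ℝ))) * μ i ^ 2)⁻¹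
        * (1 - (2 * ΔT / (J:ℝ)) * μ i)) ^ J) := by
    simp only [PJmat, Nat.cast_ofNat]
    rw [Stmt11Aux.rep hV hspec _ _ hb2, Stmt11Aux.cg_pow hV]
    rfl
  have hPnorm : ‖Matrix.toEuclideanCLM (𝕜 := ℝ) (Pmat m h ΔT ε 2)‖ ≤ 1 := by
    rw [hPrep]
    refine Stmt11Aux.norm_cg_le hV _ 1 zero_le_one (fun i => abs_le.mpr ⟨?_, (hp1 i).2⟩)
    linarith [(hp1 i).1]
  have hQnorm : ‖Matrix.toEuclideanCLM (𝕜 := ℝ)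
      (PJmat m h ΔT ε J 2 - Pmat m h ΔT ε 2)‖ ≤ 1 := by
    rw [hPJrep, hPrep, Stmt11Aux.cg_sub]
    refine Stmt11Aux.norm_cg_le hV _ 1 zero_le_one (fun i => ?_)
    have hq : 0 < ((1 - (2 * ΔT / (J:ℝ)) * μ i + (ε ^ 2 * (ΔT / (J:ℝ))) * μ i ^ 2)⁻¹
        * (1 - (2 * ΔT / (J:ℝ)) * μ i)) ^ J := pow_pos (hp2 i).1 J
    have hq1 : ((1 - (2 * ΔT / (J:ℝ)) * μ i + (ε ^ 2 * (ΔT / (J:ℝ))) * μ i ^ 2)⁻¹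
        * (1 - (2 * ΔT / (J:ℝ)) * μ i)) ^ J ≤ 1 := pow_le_one₀ (hp2 i).1.le (hp2 i).2
    simp only [Pi.sub_apply]
    exact abs_le.mpr ⟨by linarith [(hp1 i).2], by linarith [(hp1 i).1]⟩
  have hPact : ∀ x : EuclideanSpace ℝ (Fin m), ‖act (Pmat m h ΔT ε 2) x‖ ≤ ‖x‖ := by
    intro x
    calc ‖act (Pmat m h ΔT ε 2) x‖
        ≤ ‖Matrix.toEuclideanCLM (𝕜 := ℝ) (Pmat m h ΔT ε 2)‖ * ‖x‖ :=
          ContinuousLinearMap.le_opNorm _ x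
      _ ≤ 1 * ‖x‖ := mul_le_mul_of_nonneg_right hPnorm (norm_nonneg x)
      _ = ‖x‖ := one_mul _
  have hQact : ∀ x : EuclideanSpace ℝ (Fin m),
      ‖act (PJmat m h ΔT ε J 2 - Pmat m h ΔT ε 2) x‖ ≤ ‖x‖ := by
    intro x
    calc ‖act (PJmat m h ΔT ε J 2 - Pmat m h ΔT ε 2) x‖
        ≤ ‖Matrix.toEuclideanCLM (𝕜 := ℝ) (PJmat m h ΔT ε J 2 - Pmat m h ΔT ε 2)‖ * ‖x‖ :=
          ContinuousLinearMap.le_opNorm _ x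
      _ ≤ 1 * ‖x‖ := mul_le_mul_of_nonneg_right hQnorm (norm_nonneg x)
      _ = ‖x‖ := one_mul _
  intro n k
  have hMle : ∀ n j : ℕ, j ≤ n → ‖U j k‖ ≤
      (Finset.range (n + 1)).sup' (Finset.nonempty_range_iff.mpr n.succ_ne_zero)
        (fun j => ‖U j k‖) := fun n j hj =>
    Finset.le_sup' (fun j => ‖U j k‖) (Finset.mem_range.mpr (by omega))
  have hMmono : ∀ n : ℕ,
      (Finset.range (n + 1)).sup' (Finset.nonempty_range_iff.mpr n.succ_ne_zero)
        (fun j => ‖U j k‖) ≤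
      (Finset.range (n + 2)).sup' (Finset.nonempty_range_iff.mpr (n+1).succ_ne_zero)
        (fun j => ‖U j k‖) := fun n =>
    Finset.sup'_le _ _ (fun j hj => hMle (n+1) j (by
      have := Finset.mem_range.mp hj; omega))
  have hMnn : ∀ n : ℕ, 0 ≤ (Finset.range (n + 1)).sup'
      (Finset.nonempty_range_iff.mpr n.succ_ne_zero) (fun j => ‖U j k‖) :=
    fun n => le_trans (norm_nonneg (U 0 k)) (hMle n 0 (by omega))
  induction n with
  | zero =>
    rw [hrec 0 k, h0 (k + 1)]
    calc ‖act (Pmat m h ΔT ε 2) u0 + act (PJmat m h ΔT ε J 2 - Pmat m h ΔT ε 2) (U 0 k)‖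
        ≤ ‖act (Pmat m h ΔT ε 2) u0‖
          + ‖act (PJmat m h ΔT ε J 2 - Pmat m h ΔT ε 2) (U 0 k)‖ := norm_add_le _ _
      _ ≤ ‖u0‖ + ‖U 0 k‖ := add_le_add (hPact u0) (hQact (U 0 k))
      _ ≤ ‖u0‖ + ((0:ℝ) + 1) * ((Finset.range (0 + 1)).sup'
          (Finset.nonempty_range_iff.mpr Nat.one_ne_zero) (fun j => ‖U j k‖)) := by
          have := hMle 0 0 le_rfl
          rw [zero_add, one_mul]
          exact add_le_add le_rfl this
      _ = _ := by norm_num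
  | succ n ih =>
    rw [hrec (n + 1) k]
    have step1 : ‖act (Pmat m h ΔT ε 2) (U (n + 1) (k + 1))
        + act (PJmat m h ΔT ε J 2 - Pmat m h ΔT ε 2) (U (n + 1) k)‖
        ≤ ‖U (n + 1) (k + 1)‖ + ‖U (n + 1) k‖ :=
      le_trans (norm_add_le _ _) (add_le_add (hPact _) (hQact _))
    have step2 : ‖U (n + 1) k‖ ≤ (Finset.range (n + 2)).sup'
        (Finset.nonempty_range_iff.mpr (n+1).succ_ne_zero) (fun j => ‖U j k‖) :=
      hMle (n + 1) (n + 1) le_rfl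
    have step3 : ((n:ℝ) + 1) * ((Finset.range (n + 1)).sup'
        (Finset.nonempty_range_iff.mpr n.succ_ne_zero) (fun j => ‖U j k‖))
        ≤ ((n:ℝ) + 1) * ((Finset.range (n + 2)).sup'
        (Finset.nonempty_range_iff.mpr (n+1).succ_ne_zero) (fun j => ‖U j k‖)) :=
      mul_le_mul_of_nonneg_left (hMmono n) (by positivity)
    have hcast : ((n + 1 : ℕ) : ℝ) + 1 = ((n:ℝ) + 1) + 1 := by push_cast; ring
    rw [hcast]
    calc ‖act (Pmat m h ΔT ε 2) (U (n + 1) (k + 1))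
         + act (PJmat m h ΔT ε J 2 - Pmat m h ΔT ε 2) (U (n + 1) k)‖
        ≤ ‖U (n + 1) (k + 1)‖ + ‖U (n + 1) k‖ := step1
      _ ≤ (‖u0‖ + ((n:ℝ) + 1) * ((Finset.range (n + 1)).sup'
          (Finset.nonempty_range_iff.mpr n.succ_ne_zero) (fun j => ‖U j k‖)))
          + (Finset.range (n + 2)).sup'
          (Finset.nonempty_range_iff.mpr (n+1).succ_ne_zero) (fun j => ‖U j k‖) :=
          add_le_add ih step2
      _ ≤ (‖u0‖ + ((n:ℝ) + 1) * ((Finset.range (n + 2)).sup'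
          (Finset.nonempty_range_iff.mpr (n+1).succ_ne_zero) (fun j => ‖U j k‖)))
          + (Finset.range (n + 2)).sup'
          (Finset.nonempty_range_iff.mpr (n+1).succ_ne_zero) (fun j => ‖U j k‖) := by
          have := step3
          linarith
      _ = ‖u0‖ + (((n:ℝ) + 1) + 1) * ((Finset.range (n + 1 + 1)).sup'
          (Finset.nonempty_range_iff.mpr (n+1).succ_ne_zero) (fun j => ‖U j k‖)) := by
          ring
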